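/- Let T be an ultrametric represented by a rooted labeled tree on n leaves: each internal node x has label Γ_x > 0, labels are non-increasing from root to leaves, and the distance between two leaves u,v equals Γ_{lca(u,v)}. Then the weight of a minimum spanning tree on the leaf set with this metric equals ∑_{x internal} (deg(x) − 1)·Γ_x, where deg(x) is the number of children of x. -/

import Mathlib

open scoped Classical

/-- A finite rooted tree, given by parent pointers: every non-root node has a
parent, and every node reaches the root by following parents. -/
structure RTree (V : Type*) where
  root : V
  parent : V → Option V
  parent_root : parent root = none
  parent_ne_root : ∀ v, v ≠ root → (parent v).isSome
  reaches_root : ∀ v, Relation.ReflTransGen (fun a b => parent a = some b) v root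

/-- The children of a node. -/
noncomputable def RTree.children {V : Type*} [Fintype V] (T : RTree V) (v : V) : Finset V :=
  Finset.univ.filter (fun u => T.parent u = some v)

/-- `T.ancestor x u` : `x` is a (weak) ancestor of `u`. -/
def RTree.ancestor {V : Type*} (T : RTree V) (x u : V) : Prop :=
  Relation.ReflTransGen (fun a b => T.parent a = some b) u x

/-- The leaves in the subtree rooted at `x`. -/
noncomputable def RTree.leavesBelow {V : Type*} [Fintype V] (T : RTree V) (x : V) : Finset V :=
  Finset.univ.filter (fun u => T.children u = ∅ ∧ T.ancestor x u)

/-- The weight of a minimum spanning tree of the finite space `X` with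
distance function `d`. -/
noncomputable def mstWeight (X : Type*) [Fintype X] (d : X → X → ℝ) : ℝ :=
  sInf {w : ℝ | ∃ G : SimpleGraph X, G.IsTree ∧
    w = (∑ p : X × X, if G.Adj p.1 p.2 then d p.1 p.2 else 0) / 2}

set_option linter.unusedSectionVars false

namespace RTreeAux

variable {V : Type*} (T : RTree V)

/-- One step of the parent map, on `Option V`. -/
def pstep : Option V → Option V := fun o => o.bind T.parent

/-- `k`-fold parent. -/
def iter (k : ℕ) (v : V) : Option V := (pstep T)^[k] (some v)

lemma pstep_none : pstep T none = none := rfl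

lemma iterate_pstep_none (k : ℕ) : (pstep T)^[k] (none : Option V) = none := by
  induction k with
  | zero => rfl
  | succ n ih => rw [Function.iterate_succ_apply, pstep_none, ih]

lemma iter_zero (v : V) : iter T 0 v = some v := rfl

lemma iter_succ (k : ℕ) (v : V) :
    iter T (k+1) v = (pstep T)^[k] (T.parent v) := by
  rw [iter, Function.iterate_succ_apply]; rfl

lemma iter_succ' (k : ℕ) (v : V) :
    iter T (k+1) v = pstep T (iter T k v) := by
  rw [iter, Function.iterate_succ_apply']; rfl

lemma iter_parent (k : ℕ) {v w : V} (h : T.parent v = some w) :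
    iter T (k+1) v = iter T k w := by
  rw [iter_succ, h]; rfl

lemma iter_add (m k : ℕ) (v : V) :
    iter T (m + k) v = (pstep T)^[m] (iter T k v) := by
  rw [iter, Function.iterate_add_apply]; rfl

lemma iter_add_some (m k : ℕ) {v x : V} (h : iter T k v = some x) :
    iter T (m + k) v = iter T m x := by
  rw [iter_add, h]; rfl

/-- ancestor in terms of iterated parents -/
lemma ancestor_iff_iter {x u : V} :
    T.ancestor x u ↔ ∃ k, iter T k u = some x := by
  constructor
  · intro h
    induction h with
    | refl => exact ⟨0, rfl⟩
    | tail hab hbc ih =>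
      obtain ⟨k, hk⟩ := ih
      exact ⟨k+1, by rw [iter_succ', hk]; exact hbc⟩
  · rintro ⟨k, hk⟩
    induction k generalizing u with
    | zero => rw [iter_zero] at hk; cases hk; exact Relation.ReflTransGen.refl
    | succ n ih =>
      cases hp : T.parent u with
      | none => rw [iter_succ, hp, iterate_pstep_none] at hk; cases hk
      | some w =>
        have := ih (u := w) (by rw [← iter_parent T n hp]; exact hk)
        exact Relation.ReflTransGen.head hp this


lemma exists_iter_root (v : V) : ∃ n, iter T n v = some T.root :=
  (ancestor_iff_iter T).1 (T.reaches_root v)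

/-- Depth of a node: number of steps to the root. -/
noncomputable def depth (v : V) : ℕ := Nat.find (exists_iter_root T v)

lemma iter_depth (v : V) : iter T (depth T v) v = some T.root :=
  Nat.find_spec (exists_iter_root T v)

lemma depth_unique {v : V} {m : ℕ} (h : iter T m v = some T.root) : m = depth T v := by
  rcases lt_trichotomy m (depth T v) with hlt | heq | hgt
  · exact absurd h (Nat.find_min (exists_iter_root T v) hlt)
  · exact heq
  · exfalso
    obtain ⟨k, hk⟩ : ∃ k, m = (depth T v) + 1 + k := by
      refine ⟨m - (depth T v + 1), by omega⟩
    rw [hk, add_comm, iter_add, iter_succ', iter_depth] at h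
    have : pstep T (some T.root) = none := by
      simp [pstep, T.parent_root]
    rw [this, iterate_pstep_none] at h
    cases h

lemma depth_root : depth T T.root = 0 := (depth_unique T (iter_zero T T.root)).symm

lemma depth_eq_zero {v : V} (h : depth T v = 0) : v = T.root := by
  have := iter_depth T v
  rw [h, iter_zero] at this
  exact Option.some_injective _ this

lemma depth_parent {v w : V} (h : T.parent v = some w) :
    depth T v = depth T w + 1 := by
  refine (depth_unique T ?_).symm
  rw [iter_parent T _ h]; exact iter_depth T w

lemma depth_of_iter {u x : V} {k : ℕ} (h : iter T k u = some x) :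
    depth T u = depth T x + k := by
  refine (depth_unique T ?_).symm
  rw [iter_add_some T _ _ h]
  exact iter_depth T x

lemma iter_isSome_of_le {u : V} {k : ℕ} (h : k ≤ depth T u) : (iter T k u).isSome := by
  cases hk : iter T k u with
  | some x => rfl
  | none =>
    exfalso
    have h2 := iter_depth T u
    obtain ⟨m, hm⟩ : ∃ m, depth T u = m + k := ⟨depth T u - k, by omega⟩
    rw [hm, iter_add, hk, iterate_pstep_none] at h2
    cases h2

/-- ancestors of a node are comparable -/
lemma ancestor_comparable {a b u : V} (ha : T.ancestor a u) (hb : T.ancestor b u) :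
    T.ancestor a b ∨ T.ancestor b a := by
  rw [ancestor_iff_iter] at ha hb
  obtain ⟨k, hk⟩ := ha
  obtain ⟨m, hm⟩ := hb
  rcases le_total k m with h | h
  · right
    rw [ancestor_iff_iter]
    refine ⟨m - k, ?_⟩
    have : iter T (m - k + k) u = iter T (m-k) a := iter_add_some T _ _ hk
    rw [Nat.sub_add_cancel h] at this
    rw [← this, hm]
  · left
    rw [ancestor_iff_iter]
    refine ⟨k - m, ?_⟩
    have : iter T (k - m + m) u = iter T (k-m) b := iter_add_some T _ _ hm
    rw [Nat.sub_add_cancel h] at this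
    rw [← this, hk]

lemma ancestor_depth_le {a u : V} (h : T.ancestor a u) : depth T a ≤ depth T u := by
  rw [ancestor_iff_iter] at h
  obtain ⟨k, hk⟩ := h
  have := depth_of_iter T hk
  omega

lemma ancestor_eq_of_depth {a b : V} (h : T.ancestor a b) (hd : depth T a = depth T b) :
    a = b := by
  rw [ancestor_iff_iter] at h
  obtain ⟨k, hk⟩ := h
  have := depth_of_iter T hk
  have hk0 : k = 0 := by omega
  rw [hk0, iter_zero] at hk
  exact (Option.some_injective _ hk).symm

lemma ancestor_antisymm {a b : V} (h1 : T.ancestor a b) (h2 : T.ancestor b a) : a = b :=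
  ancestor_eq_of_depth T h1 (le_antisymm (ancestor_depth_le T h1) (ancestor_depth_le T h2))

lemma ancestor_trans {a b c : V} (h1 : T.ancestor a b) (h2 : T.ancestor b c) :
    T.ancestor a c := Relation.ReflTransGen.trans h2 h1

lemma ancestor_refl (a : V) : T.ancestor a a := Relation.ReflTransGen.refl

lemma ancestor_root (a : V) : T.ancestor T.root a := T.reaches_root a

lemma ancestor_parent {v w : V} (h : T.parent v = some w) : T.ancestor w v :=
  Relation.ReflTransGen.single h

/-- if `z` is a strict ancestor of `w`, there is a child of `z` above `w`. -/
lemma exists_child_on_chain {z w : V} (h : T.ancestor z w) (hne : z ≠ w) :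
    ∃ d, T.parent d = some z ∧ T.ancestor d w := by
  rw [ancestor_iff_iter] at h
  obtain ⟨k, hk⟩ := h
  cases k with
  | zero => rw [iter_zero] at hk; exact absurd (Option.some_injective _ hk).symm hne
  | succ n =>
    rw [iter_succ'] at hk
    cases hd : iter T n w with
    | none => rw [hd] at hk; cases hk
    | some d =>
      rw [hd] at hk
      refine ⟨d, hk, (ancestor_iff_iter T).2 ⟨n, hd⟩⟩

/-- if `z` is a strict ancestor of `w`, the parent of `w` is below `z`. -/
lemma ancestor_parent_of_strict {z w d : V} (h : T.ancestor z w) (hne : z ≠ w)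
    (hd : T.parent w = some d) : T.ancestor z d := by
  rw [ancestor_iff_iter] at h ⊢
  obtain ⟨k, hk⟩ := h
  cases k with
  | zero => rw [iter_zero] at hk; exact absurd (Option.some_injective _ hk).symm hne
  | succ n => exact ⟨n, by rw [← iter_parent T n hd]; exact hk⟩


section Fin
variable [Fintype V]

lemma depth_lt_card (x : V) : depth T x < Fintype.card V := by
  classical
  have hinj : Set.InjOn (fun k => (iter T k x).getD x) (Finset.range (depth T x + 1)) := by
    intro k hk m hm he
    simp only [Finset.coe_sort_coe, Finset.mem_coe, Finset.mem_range] at hk hm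
    obtain ⟨a, ha⟩ := Option.isSome_iff_exists.1 (iter_isSome_of_le T (by omega : k ≤ depth T x))
    obtain ⟨b, hb⟩ := Option.isSome_iff_exists.1 (iter_isSome_of_le T (by omega : m ≤ depth T x))
    simp only [ha, hb, Option.getD_some] at he
    have h1 := depth_of_iter T ha
    have h2 := depth_of_iter T hb
    rw [he] at h1
    omega
  have := Finset.card_le_card_of_injOn (fun k => (iter T k x).getD x)
    (fun k _ => Finset.mem_univ _) hinj
  simp only [Finset.card_range, Finset.card_univ] at this
  omega

/-- the parent, defaulting to the root. -/
noncomputable def pa (x : V) : V := (T.parent x).getD T.root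

lemma parent_eq_pa {x : V} (h : x ≠ T.root) : T.parent x = some (pa T x) := by
  obtain ⟨y, hy⟩ := Option.isSome_iff_exists.1 (T.parent_ne_root x h)
  rw [pa, hy]; rfl

lemma pa_root : pa T T.root = T.root := by rw [pa, T.parent_root]; rfl

lemma mem_children {c x : V} : c ∈ T.children x ↔ T.parent c = some x := by
  simp [RTree.children]

lemma child_ne_root {c x : V} (h : c ∈ T.children x) : c ≠ T.root := by
  intro he; rw [mem_children, he, T.parent_root] at h; cases h

lemma pa_of_child {c x : V} (h : c ∈ T.children x) : pa T c = x := by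
  rw [mem_children] at h; rw [pa, h]; rfl

lemma depth_child {c x : V} (h : c ∈ T.children x) : depth T c = depth T x + 1 :=
  depth_parent T ((mem_children T).1 h)

/-- descendants (weak) of a node -/
noncomputable def desc (x : V) : Finset V := Finset.univ.filter (fun y => T.ancestor x y)

lemma mem_desc {y x : V} : y ∈ desc T x ↔ T.ancestor x y := by simp [desc]

lemma desc_eq_insert (x : V) :
    desc T x = insert x ((T.children x).biUnion (fun c => desc T c)) := by
  ext y
  simp only [mem_desc, Finset.mem_insert, Finset.mem_biUnion]
  constructor
  · intro h
    by_cases hy : x = y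
    · exact Or.inl hy.symm
    · obtain ⟨d, hd1, hd2⟩ := exists_child_on_chain T h hy
      exact Or.inr ⟨d, (mem_children T).2 hd1, hd2⟩
  · rintro (rfl | ⟨c, hc, hy⟩)
    · exact ancestor_refl T y
    · exact ancestor_trans T (ancestor_parent T ((mem_children T).1 hc)) hy

lemma not_mem_biUnion_desc (x : V) :
    x ∉ (T.children x).biUnion (fun c => desc T c) := by
  simp only [Finset.mem_biUnion, mem_desc, not_exists, not_and]
  intro c hc hanc
  have h1 : T.ancestor x c := ancestor_parent T ((mem_children T).1 hc)
  have h2 := ancestor_antisymm T h1 hanc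
  have h3 := depth_child T hc
  rw [← h2] at h3
  omega

lemma desc_pairwise_disjoint (x : V) :
    (↑(T.children x) : Set V).PairwiseDisjoint (fun c => desc T c) := by
  intro c1 h1 c2 h2 hne
  simp only [Finset.mem_coe] at h1 h2
  simp only [Function.onFun]
  rw [Finset.disjoint_left]
  intro y hy1 hy2
  rw [mem_desc] at hy1 hy2
  rcases ancestor_comparable T hy1 hy2 with h | h
  · exact hne (ancestor_eq_of_depth T h (by rw [depth_child T h1, depth_child T h2]))
  · exact hne (ancestor_eq_of_depth T h (by rw [depth_child T h1, depth_child T h2])).symm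

lemma sum_desc (g : V → ℝ) (x : V) :
    ∑ y ∈ desc T x, g y = g x + ∑ c ∈ T.children x, ∑ y ∈ desc T c, g y := by
  rw [desc_eq_insert, Finset.sum_insert (not_mem_biUnion_desc T x),
    Finset.sum_biUnion (desc_pairwise_disjoint T x)]

lemma mem_lb {u x : V} : u ∈ T.leavesBelow x ↔ T.children u = ∅ ∧ T.ancestor x u := by
  simp [RTree.leavesBelow]

lemma lb_subset_desc (x : V) : T.leavesBelow x ⊆ desc T x := by
  intro u hu; rw [mem_desc]; exact ((mem_lb T).1 hu).2

lemma lb_leaf {x : V} (h : T.children x = ∅) : T.leavesBelow x = {x} := by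
  ext u
  simp only [mem_lb T, Finset.mem_singleton]
  constructor
  · rintro ⟨hu, hanc⟩
    by_contra hne
    obtain ⟨d, hd1, _⟩ := exists_child_on_chain T hanc (fun he => hne he.symm)
    have : d ∈ T.children x := (mem_children T).2 hd1
    rw [h] at this
    exact absurd this (Finset.notMem_empty d)
  · rintro rfl; exact ⟨h, ancestor_refl T u⟩

lemma lb_internal {x : V} (h : T.children x ≠ ∅) :
    T.leavesBelow x = (T.children x).biUnion (fun c => T.leavesBelow c) := by
  ext u
  simp only [mem_lb T, Finset.mem_biUnion]
  constructor
  · rintro ⟨hu, hanc⟩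
    have hne : x ≠ u := by rintro rfl; exact h hu
    obtain ⟨d, hd1, hd2⟩ := exists_child_on_chain T hanc hne
    exact ⟨d, (mem_children T).2 hd1, hu, hd2⟩
  · rintro ⟨c, hc, hu, hanc⟩
    exact ⟨hu, ancestor_trans T (ancestor_parent T ((mem_children T).1 hc)) hanc⟩

lemma lb_mono {x y : V} (h : T.ancestor x y) : T.leavesBelow y ⊆ T.leavesBelow x := by
  intro u hu
  rw [mem_lb T] at hu ⊢
  exact ⟨hu.1, ancestor_trans T h hu.2⟩

lemma lb_disjoint {x c1 c2 : V} (h1 : c1 ∈ T.children x) (h2 : c2 ∈ T.children x)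
    (hne : c1 ≠ c2) : Disjoint (T.leavesBelow c1) (T.leavesBelow c2) :=
  Finset.disjoint_of_subset_left (lb_subset_desc T c1)
    (Finset.disjoint_of_subset_right (lb_subset_desc T c2)
      (desc_pairwise_disjoint T x h1 h2 hne))

lemma lb_nonempty (x : V) : (T.leavesBelow x).Nonempty := by
  by_cases h : T.children x = ∅
  · rw [lb_leaf T h]; exact ⟨x, Finset.mem_singleton_self x⟩
  · obtain ⟨c, hc⟩ := Finset.nonempty_iff_ne_empty.2 h
    obtain ⟨u, hu⟩ := lb_nonempty c
    exact ⟨u, lb_mono T (ancestor_parent T ((mem_children T).1 hc)) hu⟩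
termination_by Fintype.card V - depth T x
decreasing_by
  have := depth_child T hc
  have := depth_lt_card T c
  omega

lemma card_lb_internal {x : V} (h : T.children x ≠ ∅) :
    (T.leavesBelow x).card = ∑ c ∈ T.children x, (T.leavesBelow c).card := by
  rw [lb_internal T h]
  exact Finset.card_biUnion (fun c1 h1 c2 h2 hne => lb_disjoint T h1 h2 hne)

/-- the key subtree count: sum of (children count − 1) over internal nodes below x equals
(number of leaves below x) − 1. -/
lemma sum_bf (x : V) :
    ∑ y ∈ desc T x, (if T.children y = ∅ then (0:ℝ) else ((T.children y).card : ℝ) - 1)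
      = ((T.leavesBelow x).card : ℝ) - 1 := by
  by_cases h : T.children x = ∅
  · have hd : desc T x = {x} := by
      rw [desc_eq_insert, h]; simp
    rw [hd, Finset.sum_singleton, if_pos h, lb_leaf T h, Finset.card_singleton]
    norm_num
  · rw [sum_desc, if_neg h]
    have hrec : ∀ c ∈ T.children x,
        ∑ y ∈ desc T c, (if T.children y = ∅ then (0:ℝ) else ((T.children y).card : ℝ) - 1)
          = ((T.leavesBelow c).card : ℝ) - 1 := by
      intro c hc
      exact sum_bf c
    rw [Finset.sum_congr rfl hrec, card_lb_internal T h]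
    rw [Finset.sum_sub_distrib, Finset.sum_const, nsmul_eq_mul, mul_one]
    push_cast
    ring
termination_by Fintype.card V - depth T x
decreasing_by
  have := depth_child T hc
  have := depth_lt_card T c
  omega

/-- Abel summation over the tree. -/
lemma abel_tree (g Γ : V → ℝ) :
    ∑ x, g x * Γ x
      = (∑ y ∈ desc T T.root, g y) * Γ T.root
        + ∑ x ∈ Finset.univ.filter (fun x => x ≠ T.root),
            (∑ y ∈ desc T x, g y) * (Γ x - Γ (pa T x)) := by
  classical
  set A : V → ℝ := fun x => ∑ y ∈ desc T x, g y with hA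
  have hg : ∀ x, g x = A x - ∑ c ∈ T.children x, A c := by
    intro x
    have := sum_desc T g x
    simp only [hA]
    linarith [this]
  calc ∑ x, g x * Γ x = ∑ x, (A x * Γ x - (∑ c ∈ T.children x, A c) * Γ x) := by
        refine Finset.sum_congr rfl fun x _ => ?_
        rw [hg x]; ring
    _ = ∑ x, A x * Γ x - ∑ x, (∑ c ∈ T.children x, A c) * Γ x := Finset.sum_sub_distrib _ _
    _ = ∑ x, A x * Γ x - ∑ c ∈ Finset.univ.filter (fun c => c ≠ T.root), A c * Γ (pa T c) := by
        congr 1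
        have h1 : ∀ x, (∑ c ∈ T.children x, A c) * Γ x = ∑ c ∈ T.children x, A c * Γ (pa T c) := by
          intro x
          rw [Finset.sum_mul]
          exact Finset.sum_congr rfl fun c hc => by rw [pa_of_child T hc]
        rw [Finset.sum_congr rfl (fun x _ => h1 x)]
        have h2 : ∀ x : V, T.children x
            = (Finset.univ.filter (fun c => c ≠ T.root)).filter (fun c => pa T c = x) := by
          intro x
          ext c
          simp only [mem_children, Finset.mem_filter, Finset.mem_univ, true_and]
          constructor
          · intro h
            refine ⟨child_ne_root T ((mem_children T).2 h), pa_of_child T ((mem_children T).2 h)⟩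
          · rintro ⟨h1', rfl⟩
            exact parent_eq_pa T h1'
        rw [Finset.sum_congr rfl (fun x (_ : x ∈ Finset.univ) => by rw [h2 x])]
        exact Finset.sum_fiberwise_of_maps_to (fun c _ => Finset.mem_univ _) _
    _ = _ := by
        have hsplit : ∑ x, A x * Γ x
            = A T.root * Γ T.root + ∑ x ∈ Finset.univ.filter (fun x => x ≠ T.root), A x * Γ x := by
          rw [← Finset.sum_filter_add_sum_filter_not Finset.univ (fun x => x = T.root)]
          congr 1
          have hre : Finset.filter (fun x => x = T.root) Finset.univ = {T.root} := by
            ext y; simp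
          rw [hre, Finset.sum_singleton]
        rw [hsplit, add_sub_assoc, ← Finset.sum_sub_distrib]
        simp only [hA]
        congr 1
        exact Finset.sum_congr rfl fun x _ => by ring

end Fin


section ParentGraph

variable {X : Type*} (ρ : X → X) (r : X)

/-- The graph on `X` induced by a parent map `ρ` with root `r`. -/
def parentGraph : SimpleGraph X := SimpleGraph.fromRel (fun a b => a ≠ r ∧ b = ρ a)

lemma parentGraph_adj {a b : X} :
    (parentGraph ρ r).Adj a b ↔ a ≠ b ∧ ((a ≠ r ∧ b = ρ a) ∨ (b ≠ r ∧ a = ρ b)) :=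
  SimpleGraph.fromRel_adj _ a b

variable (h : X → ℕ) (hρr : ρ r = r) (hdec : ∀ x, x ≠ r → h (ρ x) < h x)

include hρr hdec

lemma parentGraph_iter_lt : ∀ (m : ℕ) (u : X), u ≠ r →
    h (ρ^[m+1] u) < h u ∨ ρ^[m+1] u = r := by
  intro m
  induction m with
  | zero => intro u hu; exact Or.inl (hdec u hu)
  | succ m ih =>
    intro u hu
    rw [Function.iterate_succ_apply']
    rcases ih u hu with hlt | heq
    · by_cases hy : ρ^[m+1] u = r
      · rw [hy, hρr]; exact Or.inr rfl
      · exact Or.inl (lt_trans (hdec _ hy) hlt)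
    · rw [heq, hρr]; exact Or.inr rfl

lemma parentGraph_no_period {u : X} {m : ℕ} (he : ρ^[m+1] u = u) : u = r := by
  by_contra hu
  rcases parentGraph_iter_lt ρ r h hρr hdec m u hu with hlt | heq
  · rw [he] at hlt; omega
  · rw [he] at heq; exact hu heq

lemma parentGraph_reachable : ∀ u : X, (parentGraph ρ r).Reachable u r := by
  intro u
  by_cases hu : u = r
  · exact hu ▸ SimpleGraph.Reachable.refl u
  · have hne : u ≠ ρ u := fun he => by have := hdec u hu; rw [← he] at this; omega
    have hadj : (parentGraph ρ r).Adj u (ρ u) :=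
      (parentGraph_adj ρ r).2 ⟨hne, Or.inl ⟨hu, rfl⟩⟩
    exact hadj.reachable.trans (parentGraph_reachable (ρ u))
termination_by u => h u
decreasing_by exact hdec u hu

lemma parentGraph_connected [Nonempty X] : (parentGraph ρ r).Connected := by
  rw [SimpleGraph.connected_iff]
  refine ⟨fun u v => ?_, inferInstance⟩
  exact (parentGraph_reachable ρ r h hρr hdec u).trans
    (parentGraph_reachable ρ r h hρr hdec v).symm

lemma parentGraph_cross {u a c : X} (hu : u ≠ r)
    (hadj : (parentGraph ρ r).Adj a c) (hne : s(a, c) ≠ s(u, ρ u)) :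
    (∃ n, ρ^[n] a = u) ↔ (∃ n, ρ^[n] c = u) := by
  have key : ∀ a c : X, a ≠ r → c = ρ a → s(a, c) ≠ s(u, ρ u) →
      ((∃ n, ρ^[n] a = u) ↔ (∃ n, ρ^[n] c = u)) := by
    intro a c har hc hne'
    constructor
    · rintro ⟨n, hn⟩
      cases n with
      | zero =>
        simp only [Function.iterate_zero, id_eq] at hn
        exact absurd (by rw [hn, hc, hn]) hne'
      | succ m =>
        exact ⟨m, by rw [← hn, hc, ← Function.iterate_succ_apply]⟩
    · rintro ⟨n, hn⟩
      exact ⟨n + 1, by rw [Function.iterate_succ_apply, ← hc, hn]⟩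
  rw [parentGraph_adj] at hadj
  rcases hadj.2 with ⟨har, hc⟩ | ⟨hcr, ha⟩
  · exact key a c har hc hne
  · exact (key c a hcr ha (by rw [Sym2.eq_swap]; exact hne)).symm

lemma parentGraph_acyclic : (parentGraph ρ r).IsAcyclic := by
  rw [SimpleGraph.isAcyclic_iff_forall_adj_isBridge]
  have main : ∀ u : X, u ≠ r → (parentGraph ρ r).Adj u (ρ u) →
      (parentGraph ρ r).IsBridge s(u, ρ u) := by
    intro u hu hadj
    rw [SimpleGraph.isBridge_iff_adj_and_forall_walk_mem_edges]
    refine fun p => ?_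
    by_contra hmem
    have inv : ∀ (a b : X) (p : (parentGraph ρ r).Walk a b), s(u, ρ u) ∉ p.edges →
        ((∃ n, ρ^[n] a = u) ↔ (∃ n, ρ^[n] b = u)) := by
      intro a b p
      induction p with
      | nil => intro _; rfl
      | cons hadj' p ih =>
        intro hm
        rw [SimpleGraph.Walk.edges_cons, List.mem_cons] at hm
        push_neg at hm
        exact (parentGraph_cross ρ r h hρr hdec hu hadj' (Ne.symm hm.1)).trans (ih hm.2)
    have h1 : ∃ n, ρ^[n] u = u := ⟨0, rfl⟩
    have h2 := (inv u (ρ u) p hmem).1 h1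
    obtain ⟨n, hn⟩ := h2
    have : ρ^[n+1] u = u := by rw [Function.iterate_succ_apply, hn]
    exact hu (parentGraph_no_period ρ r h hρr hdec this)
  intro v w hadj
  have hvw := (parentGraph_adj ρ r).1 hadj
  rcases hvw.2 with ⟨hvr, hw⟩ | ⟨hwr, hv⟩
  · rw [hw] at hadj ⊢; exact main v hvr hadj
  · subst hv
    rw [Sym2.eq_swap]
    exact main w hwr hadj.symm

lemma parentGraph_isTree [Nonempty X] : (parentGraph ρ r).IsTree :=
  ⟨parentGraph_connected ρ r h hρr hdec, parentGraph_acyclic ρ r h hρr hdec⟩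

end ParentGraph


section TreeBound

variable {X : Type*} [Fintype X] {G : SimpleGraph X}

/-- the canonical path to `w₀` in a tree. -/
noncomputable def toRoot (hG : G.IsTree) (w₀ v : X) : G.Walk v w₀ :=
  (hG.existsUnique_path v w₀).exists.choose

lemma toRoot_isPath (hG : G.IsTree) (w₀ v : X) : (toRoot hG w₀ v).IsPath :=
  (hG.existsUnique_path v w₀).exists.choose_spec

lemma toRoot_unique (hG : G.IsTree) {w₀ v : X} (p : G.Walk v w₀) (hp : p.IsPath) :
    p = toRoot hG w₀ v := by
  obtain ⟨q, hq, huniq⟩ := hG.existsUnique_path v w₀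
  rw [huniq p hp, huniq (toRoot hG w₀ v) (toRoot_isPath hG w₀ v)]

/-- next vertex on the path to `w₀`. -/
noncomputable def nxt (hG : G.IsTree) (w₀ v : X) : X := (toRoot hG w₀ v).getVert 1

lemma nxt_self (hG : G.IsTree) (w₀ : X) : nxt hG w₀ w₀ = w₀ := by
  have : (SimpleGraph.Walk.nil : G.Walk w₀ w₀) = toRoot hG w₀ w₀ :=
    toRoot_unique hG _ SimpleGraph.Walk.IsPath.nil
  rw [nxt, ← this]
  rfl

lemma nxt_or (hG : G.IsTree) (w₀ : X) {u v : X} (hadj : G.Adj u v) :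
    nxt hG w₀ u = v ∨ nxt hG w₀ v = u := by
  classical
  set p := toRoot hG w₀ u with hp
  by_cases hv : v ∈ p.support
  · left
    have htake : (p.takeUntil v hv) = SimpleGraph.Walk.cons hadj SimpleGraph.Walk.nil := by
      have h1 : ((p.takeUntil v hv : G.Walk u v) : G.Walk u v).IsPath :=
        (toRoot_isPath hG w₀ u).takeUntil hv
      have := hG.IsAcyclic.path_unique ⟨p.takeUntil v hv, h1⟩ (SimpleGraph.Path.singleton hadj)
      exact congrArg Subtype.val this
    have hspec := p.take_spec hv
    rw [htake] at hspec
    rw [nxt, ← hp, ← hspec]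
    simp [SimpleGraph.Walk.getVert_cons]
  · right
    have hpath : (SimpleGraph.Walk.cons hadj.symm p).IsPath := by
      rw [SimpleGraph.Walk.cons_isPath_iff]
      exact ⟨toRoot_isPath hG w₀ u, hv⟩
    have := toRoot_unique hG _ hpath
    rw [nxt, ← this]
    simp [SimpleGraph.Walk.getVert_cons]

/-- In a tree, the number of ordered adjacent pairs inside a set `W`
is at most `2 * (|W| - 1)`. -/
lemma tree_pairs_in_set_le (hG : G.IsTree) {W : Finset X} {w₀ : X} (hw : w₀ ∈ W) :
    (Finset.univ.filter (fun p : X × X => G.Adj p.1 p.2 ∧ p.1 ∈ W ∧ p.2 ∈ W)).card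
      ≤ 2 * (W.card - 1) := by
  classical
  set f := nxt hG w₀ with hf
  have key : ∀ {u v : X}, G.Adj u v → f u = v ∨ f v = u := fun h => nxt_or hG w₀ h
  have hmaps : ∀ p ∈ Finset.univ.filter
      (fun p : X × X => G.Adj p.1 p.2 ∧ p.1 ∈ W ∧ p.2 ∈ W),
      (if f p.1 = p.2 then (p.1, true) else (p.2, false)) ∈ (W.erase w₀) ×ˢ Finset.univ := by
    rintro ⟨u, v⟩ hp
    simp only [Finset.mem_filter, Finset.mem_univ, true_and] at hp
    obtain ⟨hadj, h1, h2⟩ := hp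
    by_cases hc : f u = v
    · rw [if_pos hc]
      simp only [Finset.mem_product, Finset.mem_erase, Finset.mem_univ, and_true]
      refine ⟨fun he => ?_, h1⟩
      rw [he] at hc
      rw [hf, nxt_self hG w₀] at hc
      exact hadj.ne (by rw [he, hc])
    · rw [if_neg hc]
      have hc2 : f v = u := (key hadj).resolve_left hc
      simp only [Finset.mem_product, Finset.mem_erase, Finset.mem_univ, and_true]
      refine ⟨fun he => ?_, h2⟩
      rw [he] at hc2
      rw [hf, nxt_self hG w₀] at hc2
      exact hadj.ne (by rw [he, ← hc2])
  have hinj : Set.InjOn (fun p : X × X => if f p.1 = p.2 then (p.1, true) else (p.2, false))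
      (Finset.univ.filter (fun p : X × X => G.Adj p.1 p.2 ∧ p.1 ∈ W ∧ p.2 ∈ W)) := by
    rintro ⟨u, v⟩ hp ⟨u', v'⟩ hq he
    simp only [Finset.coe_filter, Set.mem_setOf_eq, Finset.mem_univ, true_and] at hp hq
    obtain ⟨hadj, _, _⟩ := hp
    obtain ⟨hadj', _, _⟩ := hq
    simp only at he
    by_cases hc : f u = v <;> by_cases hc' : f u' = v'
    · rw [if_pos hc, if_pos hc'] at he
      injection he with e1 e2
      subst e1
      rw [hc] at hc'
      rw [hc']
    · rw [if_pos hc, if_neg hc'] at he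
      simp at he
    · rw [if_neg hc, if_pos hc'] at he
      simp at he
    · rw [if_neg hc, if_neg hc'] at he
      injection he with e1 e2
      subst e1
      have h1 : f v = u := (key hadj).resolve_left hc
      have h2 : f v = u' := (key hadj').resolve_left hc'
      rw [← h1, ← h2]
  have hcard := Finset.card_le_card_of_injOn _ hmaps hinj
  rw [Finset.card_product, Finset.card_erase_of_mem hw] at hcard
  simpa [mul_comm] using hcard

end TreeBound


section Rep
variable [Fintype V]

/-- the first child of a node (or itself, for a leaf). -/
noncomputable def fc (x : V) : V :=
  if h : (T.children x).Nonempty then h.choose else x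

lemma fc_mem {x : V} (h : T.children x ≠ ∅) : fc T x ∈ T.children x := by
  have h' : (T.children x).Nonempty := Finset.nonempty_iff_ne_empty.2 h
  rw [fc, dif_pos h']
  exact h'.choose_spec

/-- the representative leaf of a node. -/
noncomputable def rep (x : V) : V :=
  if h : T.children x = ∅ then x else rep (fc T x)
termination_by Fintype.card V - depth T x
decreasing_by
  have := depth_child T (fc_mem T h)
  have := depth_lt_card T (fc T x)
  omega

lemma rep_leaf {x : V} (h : T.children x = ∅) : rep T x = x := by
  rw [rep, dif_pos h]

lemma rep_internal {x : V} (h : T.children x ≠ ∅) : rep T x = rep T (fc T x) := by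
  rw [rep, dif_neg h]

lemma rep_mem_lb (x : V) : rep T x ∈ T.leavesBelow x := by
  by_cases h : T.children x = ∅
  · rw [rep_leaf T h, mem_lb T]
    exact ⟨h, ancestor_refl T x⟩
  · rw [rep_internal T h]
    exact lb_mono T (ancestor_parent T ((mem_children T).1 (fc_mem T h))) (rep_mem_lb (fc T x))
termination_by Fintype.card V - depth T x
decreasing_by
  have := depth_child T (fc_mem T h)
  have := depth_lt_card T (fc T x)
  omega

lemma rep_is_leaf (x : V) : T.children (rep T x) = ∅ := ((mem_lb T).1 (rep_mem_lb T x)).1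

lemma anc_rep (x : V) : T.ancestor x (rep T x) := ((mem_lb T).1 (rep_mem_lb T x)).2

/-- if `c` is a non-first child, representatives of strict ancestors of `c`'s parent
avoid the subtree of `c`. -/
lemma rep_not_in_lb {y c : V} (hc : c ∈ T.children y) (hne : c ≠ fc T y) :
    ∀ z, T.ancestor z y → rep T z ∉ T.leavesBelow c := by
  intro z hz hmem
  by_cases hzy : z = y
  · subst hzy
    have hch : T.children z ≠ ∅ := fun he => by rw [he] at hc; exact Finset.notMem_empty c hc
    rw [rep_internal T hch] at hmem
    have h1 : rep T (fc T z) ∈ T.leavesBelow (fc T z) := rep_mem_lb T (fc T z)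
    exact Finset.disjoint_left.1 (lb_disjoint T (fc_mem T hch) hc (fun he => hne he.symm))
      h1 hmem
  · obtain ⟨d, hd1, hd2⟩ := exists_child_on_chain T hz hzy
    have hdz : d ∈ T.children z := (mem_children T).2 hd1
    have hch : T.children z ≠ ∅ := fun he => by rw [he] at hdz; exact Finset.notMem_empty d hdz
    rw [rep_internal T hch] at hmem
    by_cases hfd : fc T z = d
    · rw [hfd] at hmem
      exact rep_not_in_lb hc hne d hd2 hmem
    · have h1 : rep T (fc T z) ∈ T.leavesBelow (fc T z) := rep_mem_lb T (fc T z)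
      have h2 : T.leavesBelow c ⊆ T.leavesBelow d :=
        lb_mono T (ancestor_trans T hd2 (ancestor_parent T ((mem_children T).1 hc)))
      exact Finset.disjoint_left.1 (lb_disjoint T (fc_mem T hch) hdz hfd) h1 (h2 hmem)
termination_by z => Fintype.card V - depth T z
decreasing_by
  have h3 := depth_child T hdz
  have := depth_lt_card T d
  omega

/-- the highest node represented by `u`. -/
noncomputable def topOf (u : V) : V :=
  if h : (Finset.univ.filter (fun x => rep T x = u)).Nonempty then
    (Finset.exists_min_image _ (depth T) h).choose else u

lemma topOf_spec {u : V} (h : (Finset.univ.filter (fun x => rep T x = u)).Nonempty) :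
    rep T (topOf T u) = u ∧ ∀ x, rep T x = u → depth T (topOf T u) ≤ depth T x := by
  rw [topOf, dif_pos h]
  obtain ⟨h1, h2⟩ := (Finset.exists_min_image _ (depth T) h).choose_spec
  exact ⟨(Finset.mem_filter.1 h1).2,
    fun x hx => h2 x (Finset.mem_filter.2 ⟨Finset.mem_univ x, hx⟩)⟩

lemma repset_nonempty_of_rep (x : V) :
    (Finset.univ.filter (fun z => rep T z = rep T x)).Nonempty :=
  ⟨x, by simp⟩

lemma topOf_rep (x : V) : rep T (topOf T (rep T x)) = rep T x :=
  (topOf_spec T (repset_nonempty_of_rep T x)).1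

lemma topOf_min {x z : V} (hz : rep T z = rep T x) :
    depth T (topOf T (rep T x)) ≤ depth T z :=
  (topOf_spec T (repset_nonempty_of_rep T x)).2 z hz

lemma topOf_rep_root : topOf T (rep T T.root) = T.root := by
  have h1 := topOf_min T (x := T.root) rfl
  rw [depth_root] at h1
  exact depth_eq_zero T (Nat.le_zero.1 h1)

lemma topOf_anc (x : V) : T.ancestor (topOf T (rep T x)) (rep T x) := by
  have := anc_rep T (topOf T (rep T x))
  rwa [topOf_rep T x] at this

/-- key: the top of the representative of a non-first child `c` is `c` itself. -/
lemma topOf_child {y c : V} (hc : c ∈ T.children y) (hne : c ≠ fc T y) :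
    topOf T (rep T c) = c := by
  set t := topOf T (rep T c) with ht
  have h1 : rep T t = rep T c := topOf_rep T c
  have h2 : depth T t ≤ depth T c := topOf_min T rfl
  have h3 : T.ancestor t (rep T c) := topOf_anc T c
  have h4 : T.ancestor c (rep T c) := anc_rep T c
  rcases ancestor_comparable T h3 h4 with h | h
  · by_contra hne'
    have h5 : T.ancestor t y := ancestor_parent_of_strict T h hne' ((mem_children T).1 hc)
    exact rep_not_in_lb T hc hne t h5 (h1 ▸ rep_mem_lb T c)
  · exact ((ancestor_eq_of_depth T h (le_antisymm (ancestor_depth_le T h) h2))).symm ▸ rfl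

lemma rep_child_ne_rep_root {y c : V} (hc : c ∈ T.children y) (hne : c ≠ fc T y) :
    rep T c ≠ rep T T.root := by
  intro he
  have h1 := topOf_child T hc hne
  rw [he, topOf_rep_root T] at h1
  exact child_ne_root T hc h1.symm

lemma rep_ne_rep_child {y c : V} (hc : c ∈ T.children y) (hne : c ≠ fc T y) :
    rep T y ≠ rep T c := by
  have hch : T.children y ≠ ∅ := fun he => by rw [he] at hc; exact Finset.notMem_empty c hc
  rw [rep_internal T hch]
  intro he
  exact Finset.disjoint_left.1 (lb_disjoint T (fc_mem T hch) hc (fun h => hne h.symm))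
    (rep_mem_lb T (fc T y)) (he ▸ rep_mem_lb T c)

end Rep


section LeafGraph
variable [Fintype V]

/-- representative as an element of the leaf subtype. -/
noncomputable def repL (x : V) : {v : V // T.children v = ∅} := ⟨rep T x, rep_is_leaf T x⟩

/-- the parent map on leaves. -/
noncomputable def lpar (u : {v : V // T.children v = ∅}) : {v : V // T.children v = ∅} :=
  repL T (pa T (topOf T u.1))

lemma repset_nonempty_of_leaf (u : {v : V // T.children v = ∅}) :
    (Finset.univ.filter (fun x => rep T x = u.1)).Nonempty :=
  ⟨u.1, by simp [rep_leaf T u.2]⟩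

lemma topOf_leaf_rep (u : {v : V // T.children v = ∅}) : rep T (topOf T u.1) = u.1 :=
  (topOf_spec T (repset_nonempty_of_leaf T u)).1

lemma topOf_leaf_min {u : {v : V // T.children v = ∅}} {z : V} (hz : rep T z = u.1) :
    depth T (topOf T u.1) ≤ depth T z :=
  (topOf_spec T (repset_nonempty_of_leaf T u)).2 z hz

lemma lpar_root : lpar T (repL T T.root) = repL T T.root := by
  rw [lpar]
  have h1 : (repL T T.root).1 = rep T T.root := rfl
  rw [h1, topOf_rep_root T, pa_root T]

lemma lpar_dec {u : {v : V // T.children v = ∅}} (hu : u ≠ repL T T.root) :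
    depth T (topOf T (lpar T u).1) < depth T (topOf T u.1) := by
  set t := topOf T u.1 with ht
  have htr : t ≠ T.root := by
    intro he
    apply hu
    have : rep T t = u.1 := topOf_leaf_rep T u
    rw [he] at this
    exact Subtype.ext this.symm
  have hpa : T.parent t = some (pa T t) := parent_eq_pa T htr
  have hd : depth T t = depth T (pa T t) + 1 := depth_parent T hpa
  have h2 : (lpar T u).1 = rep T (pa T t) := rfl
  have h3 : depth T (topOf T (lpar T u).1) ≤ depth T (pa T t) := by
    rw [h2]
    exact topOf_min T rfl
  omega

/-- the constructed spanning graph on leaves. -/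
noncomputable def leafGraph : SimpleGraph {v : V // T.children v = ∅} :=
  parentGraph (lpar T) (repL T T.root)

lemma leafGraph_isTree [Nonempty {v : V // T.children v = ∅}] : (leafGraph T).IsTree :=
  parentGraph_isTree (lpar T) (repL T T.root) (fun u => depth T (topOf T u.1))
    (lpar_root T) (fun u hu => lpar_dec T hu)

lemma lpar_gen {y c : V} (hc : c ∈ T.children y) (hne : c ≠ fc T y) :
    lpar T (repL T c) = repL T y := by
  rw [lpar]
  have h1 : (repL T c).1 = rep T c := rfl
  rw [h1, topOf_child T hc hne, pa_of_child T hc]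

lemma leafGraph_gen_adj {y c : V} (hc : c ∈ T.children y) (hne : c ≠ fc T y) :
    (leafGraph T).Adj (repL T y) (repL T c) := by
  rw [leafGraph, parentGraph_adj]
  refine ⟨fun he => rep_ne_rep_child T hc hne (congrArg Subtype.val he), Or.inr ?_⟩
  refine ⟨fun he => rep_child_ne_rep_root T hc hne (congrArg Subtype.val he), ?_⟩
  rw [lpar_gen T hc hne]

end LeafGraph

section Lca

lemma gamma_anc {Γ : V → ℝ} (hmono : ∀ u v, T.parent u = some v → Γ u ≤ Γ v)
    {a b : V} (h : T.ancestor a b) : Γ b ≤ Γ a := by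
  induction h with
  | refl => exact le_refl _
  | tail hab hbc ih => exact le_trans ih (hmono _ _ hbc)

variable [Fintype V] (lca : V → V → V)

lemma children_eq_of_anc {c1 c2 y u : V} (h1 : c1 ∈ T.children y) (h2 : c2 ∈ T.children y)
    (hu1 : T.ancestor c1 u) (hu2 : T.ancestor c2 u) : c1 = c2 := by
  rcases ancestor_comparable T hu1 hu2 with h | h
  · exact ancestor_eq_of_depth T h (by rw [depth_child T h1, depth_child T h2])
  · exact (ancestor_eq_of_depth T h (by rw [depth_child T h1, depth_child T h2])).symm

lemma lca_symm (hlca1 : ∀ u v, T.ancestor (lca u v) u) (hlca2 : ∀ u v, T.ancestor (lca u v) v)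
    (hlca3 : ∀ u v w, T.ancestor w u → T.ancestor w v → T.ancestor w (lca u v)) (a b : V) :
    lca a b = lca b a :=
  ancestor_antisymm T (hlca3 b a (lca a b) (hlca2 a b) (hlca1 a b))
    (hlca3 a b (lca b a) (hlca2 b a) (hlca1 b a))

lemma lca_sibling (hlca1 : ∀ u v, T.ancestor (lca u v) u)
    (hlca2 : ∀ u v, T.ancestor (lca u v) v)
    (hlca3 : ∀ u v w, T.ancestor w u → T.ancestor w v → T.ancestor w (lca u v))
    {y c1 c2 u v : V} (h1 : c1 ∈ T.children y) (h2 : c2 ∈ T.children y) (hne : c1 ≠ c2)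
    (hu : T.ancestor c1 u) (hv : T.ancestor c2 v) : lca u v = y := by
  have hyu : T.ancestor y u := ancestor_trans T (ancestor_parent T ((mem_children T).1 h1)) hu
  have hyv : T.ancestor y v := ancestor_trans T (ancestor_parent T ((mem_children T).1 h2)) hv
  have hyl : T.ancestor y (lca u v) := hlca3 u v y hyu hyv
  by_contra hne'
  obtain ⟨d, hd1, hd2⟩ := exists_child_on_chain T hyl (fun he => hne' he.symm)
  have hdu : T.ancestor d u := ancestor_trans T hd2 (hlca1 u v)
  have hdv : T.ancestor d v := ancestor_trans T hd2 (hlca2 u v)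
  have e1 : d = c1 := children_eq_of_anc T ((mem_children T).2 hd1) h1 hdu hu
  have e2 : d = c2 := children_eq_of_anc T ((mem_children T).2 hd1) h2 hdv hv
  exact hne (e1 ▸ e2)

end Lca


section Main
variable [Fintype V] (lca : V → V → V) (Γ : V → ℝ)

/-- number of ordered adjacent pairs with both endpoints below `x` (as a real). -/
noncomputable def mG (G : SimpleGraph {v : V // T.children v = ∅}) (x : V) : ℝ :=
  ((Finset.univ.filter (fun p : ({v : V // T.children v = ∅} × {v : V // T.children v = ∅}) =>
      G.Adj p.1 p.2 ∧ T.ancestor x p.1.1 ∧ T.ancestor x p.2.1)).card : ℝ)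

lemma core
    (hlca1 : ∀ u v, T.ancestor (lca u v) u)
    (hlca2 : ∀ u v, T.ancestor (lca u v) v)
    (hlca3 : ∀ u v w, T.ancestor w u → T.ancestor w v → T.ancestor w (lca u v))
    (G : SimpleGraph {v : V // T.children v = ∅}) :
    (∑ p : ({v : V // T.children v = ∅} × {v : V // T.children v = ∅}),
        if G.Adj p.1 p.2 then Γ (lca p.1.1 p.2.1) else 0)
      = mG T G T.root * Γ T.root
        + ∑ x ∈ Finset.univ.filter (fun x => x ≠ T.root), mG T G x * (Γ x - Γ (pa T x)) := by
  classical
  set lca' : ({v : V // T.children v = ∅} × {v : V // T.children v = ∅}) → V :=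
    fun p => lca p.1.1 p.2.1 with hlca'
  set P : Finset ({v : V // T.children v = ∅} × {v : V // T.children v = ∅}) :=
    Finset.univ.filter (fun p => G.Adj p.1 p.2) with hP
  have step1 : (∑ p : ({v : V // T.children v = ∅} × {v : V // T.children v = ∅}),
      if G.Adj p.1 p.2 then Γ (lca p.1.1 p.2.1) else 0) = ∑ p ∈ P, Γ (lca' p) := by
    rw [hP, Finset.sum_filter]
  have step2 : ∑ p ∈ P, Γ (lca' p)
      = ∑ x : V, (((P.filter (fun p => lca' p = x)).card : ℝ)) * Γ x := by
    rw [← Finset.sum_fiberwise_of_maps_to (t := (Finset.univ : Finset V))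
      (fun p _ => Finset.mem_univ (lca' p)) (fun p => Γ (lca' p))]
    refine Finset.sum_congr rfl fun x _ => ?_
    have hcongr : ∀ p ∈ P.filter (fun p => lca' p = x), Γ (lca' p) = Γ x := fun p hp => by
      rw [(Finset.mem_filter.1 hp).2]
    rw [Finset.sum_congr rfl hcongr, Finset.sum_const, nsmul_eq_mul]
  have step3 : ∀ x : V, ∑ y ∈ desc T x, ((P.filter (fun p => lca' p = y)).card : ℝ)
      = mG T G x := by
    intro x
    rw [mG]
    set Q := Finset.univ.filter
      (fun p : ({v : V // T.children v = ∅} × {v : V // T.children v = ∅}) =>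
        G.Adj p.1 p.2 ∧ T.ancestor x p.1.1 ∧ T.ancestor x p.2.1) with hQ
    have hmaps : ∀ p ∈ Q, lca' p ∈ desc T x := by
      intro p hp
      rw [hQ, Finset.mem_filter] at hp
      rw [mem_desc]
      exact hlca3 _ _ x hp.2.2.1 hp.2.2.2
    have hcards := Finset.card_eq_sum_card_fiberwise hmaps
    have hfib : ∀ y ∈ desc T x, Q.filter (fun p => lca' p = y)
        = P.filter (fun p => lca' p = y) := by
      intro y hy
      ext p
      rw [hQ, hP]
      simp only [Finset.mem_filter, Finset.mem_univ, true_and]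
      constructor
      · rintro ⟨⟨h1, -, -⟩, h2⟩; exact ⟨h1, h2⟩
      · rintro ⟨h1, h2⟩
        refine ⟨⟨h1, ?_, ?_⟩, h2⟩
        · exact ancestor_trans T ((mem_desc T).1 hy) (h2 ▸ hlca1 p.1.1 p.2.1)
        · exact ancestor_trans T ((mem_desc T).1 hy) (h2 ▸ hlca2 p.1.1 p.2.1)
    rw [hcards]
    push_cast
    exact Finset.sum_congr rfl fun y hy => by rw [hfib y hy]
  rw [step1, step2, abel_tree T _ Γ, step3 T.root]
  congr 1
  exact Finset.sum_congr rfl fun x _ => by rw [step3 x]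

lemma mg_root [Nonempty {v : V // T.children v = ∅}]
    (G : SimpleGraph {v : V // T.children v = ∅}) (hG : G.IsTree) :
    mG T G T.root = 2 * ((Fintype.card {v : V // T.children v = ∅} : ℝ) - 1) := by
  classical
  rw [mG]
  have h4 : 2 * G.edgeFinset.card = (Finset.univ.filter
      (fun p : ({v : V // T.children v = ∅} × {v : V // T.children v = ∅}) =>
        G.Adj p.1 p.2 ∧ T.ancestor T.root p.1.1 ∧ T.ancestor T.root p.2.1)).card := by
    rw [SimpleGraph.two_mul_card_edgeFinset]
    refine le_antisymm (Finset.card_le_card ?_) (Finset.card_le_card ?_)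
    · rintro ⟨a, b⟩ hp
      simp only [Finset.mem_filter, Finset.mem_univ, true_and] at hp ⊢
      exact ⟨hp, ancestor_root T a.1, ancestor_root T b.1⟩
    · rintro ⟨a, b⟩ hp
      simp only [Finset.mem_filter, Finset.mem_univ, true_and] at hp ⊢
      exact hp.1
  have h2 := hG.card_edgeFinset
  have h3 : 0 < Fintype.card {v : V // T.children v = ∅} := Fintype.card_pos
  rw [← h4, ← h2]
  push_cast
  ring

lemma mg_le (G : SimpleGraph {v : V // T.children v = ∅}) (hG : G.IsTree) (x : V) :
    mG T G x ≤ 2 * (((T.leavesBelow x).card : ℝ) - 1) := by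
  classical
  set W : Finset {v : V // T.children v = ∅} :=
    Finset.univ.filter (fun u => T.ancestor x u.1) with hW
  have hw0 : (⟨rep T x, rep_is_leaf T x⟩ : {v : V // T.children v = ∅}) ∈ W := by
    rw [hW, Finset.mem_filter]
    exact ⟨Finset.mem_univ _, anc_rep T x⟩
  have hcardW : W.card = (T.leavesBelow x).card := by
    refine Finset.card_bij (fun u _ => u.1) ?_ ?_ ?_
    · intro u hu
      rw [hW, Finset.mem_filter] at hu
      rw [mem_lb T]
      exact ⟨u.2, hu.2⟩
    · intro u _ v _ h
      exact Subtype.ext h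
    · intro v hv
      rw [mem_lb T] at hv
      refine ⟨⟨v, hv.1⟩, ?_, rfl⟩
      rw [hW, Finset.mem_filter]
      exact ⟨Finset.mem_univ _, hv.2⟩
  have hbound' := tree_pairs_in_set_le hG hw0
  have hbound : (Finset.univ.filter
      (fun p : ({v : V // T.children v = ∅} × {v : V // T.children v = ∅}) =>
        G.Adj p.1 p.2 ∧ T.ancestor x p.1.1 ∧ T.ancestor x p.2.1)).card
      ≤ 2 * ((T.leavesBelow x).card - 1) := by
    rw [← hcardW]
    refine le_trans (Finset.card_le_card ?_) hbound'
    intro p hp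
    simp only [Finset.mem_filter, Finset.mem_univ, true_and, hW] at hp ⊢
    exact hp
  rw [mG]
  have hpos : 0 < (T.leavesBelow x).card := Finset.card_pos.2 (lb_nonempty T x)
  have : ((Finset.univ.filter
      (fun p : ({v : V // T.children v = ∅} × {v : V // T.children v = ∅}) =>
        G.Adj p.1 p.2 ∧ T.ancestor x p.1.1 ∧ T.ancestor x p.2.1)).card : ℝ)
      ≤ ((2 * ((T.leavesBelow x).card - 1) : ℕ) : ℝ) := Nat.cast_le.2 hbound
  calc mG T G x ≤ ((2 * ((T.leavesBelow x).card - 1) : ℕ) : ℝ) := this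
    _ = 2 * (((T.leavesBelow x).card : ℝ) - 1) := by
        push_cast [Nat.cast_sub hpos]
        ring


lemma card_lb_root [Nonempty {v : V // T.children v = ∅}] :
    (T.leavesBelow T.root).card = Fintype.card {v : V // T.children v = ∅} := by
  classical
  rw [Fintype.card_subtype]
  refine le_antisymm (Finset.card_le_card ?_) (Finset.card_le_card ?_)
  · intro u hu
    rw [mem_lb T] at hu
    simp only [Finset.mem_filter, Finset.mem_univ, true_and]
    exact hu.1
  · intro u hu
    simp only [Finset.mem_filter, Finset.mem_univ, true_and] at hu
    rw [mem_lb T]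
    exact ⟨hu, ancestor_root T u⟩

lemma S_decomp [Nonempty {v : V // T.children v = ∅}] :
    ∑ v ∈ Finset.univ.filter (fun v : V => T.children v ≠ ∅),
        (((T.children v).card : ℝ) - 1) * Γ v
      = ((Fintype.card {v : V // T.children v = ∅} : ℝ) - 1) * Γ T.root
        + ∑ x ∈ Finset.univ.filter (fun x => x ≠ T.root),
            (((T.leavesBelow x).card : ℝ) - 1) * (Γ x - Γ (pa T x)) := by
  classical
  set bf : V → ℝ := fun y => if T.children y = ∅ then (0:ℝ) else ((T.children y).card : ℝ) - 1
    with hbf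
  have h1 : ∑ v ∈ Finset.univ.filter (fun v : V => T.children v ≠ ∅),
      (((T.children v).card : ℝ) - 1) * Γ v = ∑ x : V, bf x * Γ x := by
    rw [Finset.sum_filter]
    refine Finset.sum_congr rfl fun x _ => ?_
    rw [hbf]
    by_cases h : T.children x = ∅
    · simp [h]
    · simp [h]
  rw [h1, abel_tree T bf Γ]
  have h2 : ∀ x : V, ∑ y ∈ desc T x, bf y = ((T.leavesBelow x).card : ℝ) - 1 := fun x =>
    sum_bf T x
  rw [h2 T.root, card_lb_root T]
  congr 1
  exact Finset.sum_congr rfl fun x _ => by rw [h2 x]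

lemma mg_ge
    (hlca1 : ∀ u v, T.ancestor (lca u v) u)
    (hlca2 : ∀ u v, T.ancestor (lca u v) v)
    (hlca3 : ∀ u v w, T.ancestor w u → T.ancestor w v → T.ancestor w (lca u v))
    (x : V) :
    2 * (((T.leavesBelow x).card : ℝ) - 1) ≤ mG T (leafGraph T) x := by
  classical
  have hkey : ∀ {y c : V}, c ∈ T.children y → c ≠ fc T y → lca (rep T y) (rep T c) = y := by
    intro y c hc hne
    have hch : T.children y ≠ ∅ := fun he => by rw [he] at hc; exact Finset.notMem_empty c hc
    refine lca_sibling T lca hlca1 hlca2 hlca3 (fc_mem T hch) hc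
      (fun he => hne he.symm) ?_ (anc_rep T c)
    rw [rep_internal T hch]
    exact anc_rep T (fc T y)
  have hdisj : ∀ {y c c' : V}, c ∈ T.children y → c' ∈ T.children y → c ≠ c' →
      rep T c ≠ rep T c' := by
    intro y c c' hc hc' hne he
    exact Finset.disjoint_left.1 (lb_disjoint T hc hc' hne) (rep_mem_lb T c)
      (he ▸ rep_mem_lb T c')
  set Idx : Finset (V × V) :=
    (desc T x).biUnion (fun y => ((T.children y).erase (fc T y)).image (fun c => (y, c)))
    with hIdx
  have hmemIdx : ∀ q ∈ Idx, q.1 ∈ desc T x ∧ q.2 ∈ T.children q.1 ∧ q.2 ≠ fc T q.1 := by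
    rintro ⟨y, c⟩ hq
    rw [hIdx, Finset.mem_biUnion] at hq
    obtain ⟨y', hy', hq⟩ := hq
    rw [Finset.mem_image] at hq
    obtain ⟨c', hc', he⟩ := hq
    obtain ⟨he1, he2⟩ := Prod.mk.injEq .. ▸ he
    subst he1; subst he2
    rw [Finset.mem_erase] at hc'
    exact ⟨hy', hc'.2, hc'.1⟩
  have hcard1 : (Idx.card : ℝ) = ((T.leavesBelow x).card : ℝ) - 1 := by
    rw [hIdx, Finset.card_biUnion]
    · rw [← sum_bf T x]
      push_cast
      refine Finset.sum_congr rfl fun y _ => ?_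
      rw [Finset.card_image_of_injective _ (fun a b h => (Prod.mk.injEq .. ▸ h).2)]
      by_cases h : T.children y = ∅
      · simp [h]
      · rw [if_neg h, Finset.card_erase_of_mem (fc_mem T h)]
        have : 1 ≤ (T.children y).card :=
          Finset.card_pos.2 (Finset.nonempty_iff_ne_empty.2 h)
        push_cast [Nat.cast_sub this]
        ring
    · intro y1 _ y2 _ hne
      simp only [Function.onFun]
      rw [Finset.disjoint_left]
      rintro ⟨a, b⟩ h1 h2
      rw [Finset.mem_image] at h1 h2
      obtain ⟨c1, -, he1⟩ := h1
      obtain ⟨c2, -, he2⟩ := h2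
      exact hne ((Prod.ext_iff.1 he1).1.trans (Prod.ext_iff.1 he2).1.symm)
  have hφmaps : ∀ q ∈ Idx ×ˢ (Finset.univ : Finset Bool),
      (cond q.2 (repL T q.1.1, repL T q.1.2) (repL T q.1.2, repL T q.1.1)) ∈
        Finset.univ.filter
          (fun p : ({v : V // T.children v = ∅} × {v : V // T.children v = ∅}) =>
            (leafGraph T).Adj p.1 p.2 ∧ T.ancestor x p.1.1 ∧ T.ancestor x p.2.1) := by
    rintro ⟨⟨y, c⟩, b⟩ hq
    rw [Finset.mem_product] at hq
    obtain ⟨hy, hc, hne⟩ := hmemIdx _ hq.1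
    have hadj : (leafGraph T).Adj (repL T y) (repL T c) := leafGraph_gen_adj T hc hne
    have ha1 : T.ancestor x (rep T y) := ancestor_trans T ((mem_desc T).1 hy) (anc_rep T y)
    have ha2 : T.ancestor x (rep T c) :=
      ancestor_trans T (ancestor_trans T ((mem_desc T).1 hy)
        (ancestor_parent T ((mem_children T).1 hc))) (anc_rep T c)
    cases b
    · simp only [Bool.cond_false, Finset.mem_filter, Finset.mem_univ, true_and]
      exact ⟨hadj.symm, ha2, ha1⟩
    · simp only [Bool.cond_true, Finset.mem_filter, Finset.mem_univ, true_and]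
      exact ⟨hadj, ha1, ha2⟩
  have hφinj : Set.InjOn
      (fun q : (V × V) × Bool =>
        cond q.2 (repL T q.1.1, repL T q.1.2) (repL T q.1.2, repL T q.1.1))
      (↑(Idx ×ˢ (Finset.univ : Finset Bool)) : Set ((V × V) × Bool)) := by
    rintro ⟨⟨y, c⟩, b⟩ hq ⟨⟨y', c'⟩, b'⟩ hq' he
    simp only [Finset.mem_coe, Finset.mem_product] at hq hq'
    obtain ⟨hy, hc, hne⟩ := hmemIdx _ hq.1
    obtain ⟨hy', hc', hne'⟩ := hmemIdx _ hq'.1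
    have hchy : T.children y ≠ ∅ := fun h0 => by
      rw [h0] at hc; exact Finset.notMem_empty _ hc
    have hchy' : T.children y' ≠ ∅ := fun h0 => by
      rw [h0] at hc'; exact Finset.notMem_empty _ hc'
    cases b <;> cases b' <;> simp only [Bool.cond_false, Bool.cond_true, Prod.mk.injEq] at he
    · -- false / false : (rep c, rep y) = (rep c', rep y')
      obtain ⟨e1, e2⟩ := he
      have ec : rep T c = rep T c' := congrArg Subtype.val e1
      have ey : rep T y = rep T y' := congrArg Subtype.val e2
      have hyy : y = y' := by
        have := hkey hc hne
        rw [ey, ec, hkey hc' hne'] at this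
        exact this.symm
      subst hyy
      have hcc : c = c' := by
        by_contra hcc
        exact hdisj hc hc' hcc ec
      rw [hcc]
    · -- false / true : (rep c, rep y) = (rep y', rep c')
      obtain ⟨e1, e2⟩ := he
      have e1' : rep T c = rep T y' := congrArg Subtype.val e1
      have e2' : rep T y = rep T c' := congrArg Subtype.val e2
      have hyy : y = y' := by
        have h5 := hkey hc hne
        rw [lca_symm T lca hlca1 hlca2 hlca3] at h5
        rw [e1', e2', hkey hc' hne'] at h5
        exact h5.symm
      subst hyy
      exfalso
      rw [rep_internal T hchy] at e2'
      exact hdisj (fc_mem T hchy) hc' (fun h6 => hne' h6.symm) e2'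
    · -- true / false : (rep y, rep c) = (rep c', rep y')
      obtain ⟨e1, e2⟩ := he
      have e1' : rep T y = rep T c' := congrArg Subtype.val e1
      have e2' : rep T c = rep T y' := congrArg Subtype.val e2
      have hyy : y = y' := by
        have h5 := hkey hc' hne'
        rw [lca_symm T lca hlca1 hlca2 hlca3] at h5
        rw [← e1', ← e2', hkey hc hne] at h5
        exact h5
      subst hyy
      exfalso
      rw [rep_internal T hchy] at e1'
      exact hdisj (fc_mem T hchy) hc' (fun h6 => hne' h6.symm) e1'
    · -- true / true
      obtain ⟨e1, e2⟩ := he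
      have ey : rep T y = rep T y' := congrArg Subtype.val e1
      have ec : rep T c = rep T c' := congrArg Subtype.val e2
      have hyy : y = y' := by
        have := hkey hc hne
        rw [ey, ec, hkey hc' hne'] at this
        exact this.symm
      subst hyy
      have hcc : c = c' := by
        by_contra hcc
        exact hdisj hc hc' hcc ec
      rw [hcc]
  have hcount := Finset.card_le_card_of_injOn _ hφmaps hφinj
  rw [Finset.card_product] at hcount
  have hbool : (Finset.univ : Finset Bool).card = 2 := by simp
  rw [hbool] at hcount
  rw [mG]
  calc 2 * (((T.leavesBelow x).card : ℝ) - 1) = 2 * (Idx.card : ℝ) := by rw [hcard1]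
    _ = ((Idx.card * 2 : ℕ) : ℝ) := by push_cast; ring
    _ ≤ _ := Nat.cast_le.2 hcount

end Main

end RTreeAux

open RTreeAux

/-- For an ultrametric given by a rooted labeled tree (labels positive on internal
nodes, zero exactly on leaves, non-increasing from root to leaves, and the
distance between leaves `u, v` being `Γ (lca u v)`), the weight of a minimum
spanning tree on the leaves equals `∑_{x internal} (deg x − 1)·Γ x`. -/
theorem stmt_2 {V : Type*} [Fintype V] (T : RTree V) (Γ : V → ℝ) (lca : V → V → V)
    (hleaf : ∀ v, Γ v = 0 ↔ T.children v = ∅)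
    (hpos : ∀ v, T.children v ≠ ∅ → 0 < Γ v)
    (hmono : ∀ u v, T.parent u = some v → Γ u ≤ Γ v)
    (hlca1 : ∀ u v, T.ancestor (lca u v) u)
    (hlca2 : ∀ u v, T.ancestor (lca u v) v)
    (hlca3 : ∀ u v w, T.ancestor w u → T.ancestor w v → T.ancestor w (lca u v))
    [Nonempty {v : V // T.children v = ∅}] :
    mstWeight {v : V // T.children v = ∅} (fun u v => Γ (lca u.1 v.1)) =
      ∑ v ∈ Finset.univ.filter (fun v : V => T.children v ≠ ∅),
        (((T.children v).card : ℝ) - 1) * Γ v := by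

  classical
  have hsign : ∀ x : V, x ≠ T.root → Γ x - Γ (pa T x) ≤ 0 := by
    intro x hx
    have := hmono x (pa T x) (parent_eq_pa T hx)
    linarith
  set S : ℝ := ∑ v ∈ Finset.univ.filter (fun v : V => T.children v ≠ ∅),
    (((T.children v).card : ℝ) - 1) * Γ v with hS
  have hSd : S = ((Fintype.card {v : V // T.children v = ∅} : ℝ) - 1) * Γ T.root
      + ∑ x ∈ Finset.univ.filter (fun x => x ≠ T.root),
          (((T.leavesBelow x).card : ℝ) - 1) * (Γ x - Γ (pa T x)) := by
    rw [hS, S_decomp T Γ]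
  have hlow : ∀ G : SimpleGraph {v : V // T.children v = ∅}, G.IsTree →
      2 * S ≤ (∑ p : ({v : V // T.children v = ∅} × {v : V // T.children v = ∅}),
        if G.Adj p.1 p.2 then Γ (lca p.1.1 p.2.1) else 0) := by
    intro G hG
    rw [core T lca Γ hlca1 hlca2 hlca3 G, mg_root T G hG, hSd]
    have hterm : ∑ x ∈ Finset.univ.filter (fun x => x ≠ T.root),
        2 * ((((T.leavesBelow x).card : ℝ) - 1) * (Γ x - Γ (pa T x)))
        ≤ ∑ x ∈ Finset.univ.filter (fun x => x ≠ T.root),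
            mG T G x * (Γ x - Γ (pa T x)) := by
      refine Finset.sum_le_sum fun x hx => ?_
      rw [Finset.mem_filter] at hx
      have h1 := mg_le T G hG x
      have h2 := hsign x hx.2
      have := mul_le_mul_of_nonpos_right h1 h2
      linarith
    rw [mul_add, Finset.mul_sum]
    have h9 : 2 * (((Fintype.card {v : V // T.children v = ∅} : ℝ) - 1) * Γ T.root)
        = 2 * ((Fintype.card {v : V // T.children v = ∅} : ℝ) - 1) * Γ T.root := by ring
    linarith [hterm]
  have htree : (leafGraph T).IsTree := leafGraph_isTree T
  have hup : (∑ p : ({v : V // T.children v = ∅} × {v : V // T.children v = ∅}),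
      if (leafGraph T).Adj p.1 p.2 then Γ (lca p.1.1 p.2.1) else 0) ≤ 2 * S := by
    rw [core T lca Γ hlca1 hlca2 hlca3 (leafGraph T), mg_root T (leafGraph T) htree, hSd]
    have hterm : ∑ x ∈ Finset.univ.filter (fun x => x ≠ T.root),
        mG T (leafGraph T) x * (Γ x - Γ (pa T x))
        ≤ ∑ x ∈ Finset.univ.filter (fun x => x ≠ T.root),
            2 * ((((T.leavesBelow x).card : ℝ) - 1) * (Γ x - Γ (pa T x))) := by
      refine Finset.sum_le_sum fun x hx => ?_
      rw [Finset.mem_filter] at hx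
      have h1 := mg_ge T lca hlca1 hlca2 hlca3 x
      have h2 := hsign x hx.2
      have := mul_le_mul_of_nonpos_right h1 h2
      linarith
    rw [mul_add, Finset.mul_sum]
    have h9 : 2 * (((Fintype.card {v : V // T.children v = ∅} : ℝ) - 1) * Γ T.root)
        = 2 * ((Fintype.card {v : V // T.children v = ∅} : ℝ) - 1) * Γ T.root := by ring
    linarith [hterm]
  have heq : (∑ p : ({v : V // T.children v = ∅} × {v : V // T.children v = ∅}),
      if (leafGraph T).Adj p.1 p.2 then Γ (lca p.1.1 p.2.1) else 0) = 2 * S :=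
    le_antisymm hup (hlow _ htree)
  rw [mstWeight]
  refine IsLeast.csInf_eq ⟨⟨leafGraph T, htree, ?_⟩, ?_⟩
  · rw [heq]; ring
  · rintro w ⟨G, hG, rfl⟩
    have := hlow G hG
    linarith
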